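/- In the Markovian user model, let C be an arbitrary set of bidders and let j be a number of positions with 1 ≤ j ≤ |C|. Then for every S ∈ OPT(C, j−1) there exists S' ∈ OPT(C, j) with S ⊊ S'; that is, every optimal set of bidders for j−1 positions is contained in some optimal set of bidders for j positions. -/

import Mathlib

/-- Efficiency of an assignment `x` of bidders to `k` positions in the
Markovian user model: `Σ_j e (x j) · Π_{l < j} q (x l)`. -/
noncomputable def eff (n : ℕ) (e q : Fin n → ℝ) (k : ℕ) (x : Fin k → Fin n) : ℝ :=
  ∑ j : Fin k, e (x j) * ∏ l ∈ Finset.univ.filter (fun l => l < j), q (x l)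

/-- The value of a finite set `S` of bidders: the best efficiency obtainable
by arranging the members of `S` in the `S.card` positions. -/
noncomputable def setValue (n : ℕ) (e q : Fin n → ℝ) (S : Finset (Fin n)) : ℝ :=
  sSup {r : ℝ | ∃ x : Fin S.card → Fin n,
    Function.Injective x ∧ (∀ j, x j ∈ S) ∧ r = eff n e q S.card x}

set_option linter.unusedSectionVars false

namespace OptNest

variable {n : ℕ} (e q : Fin n → ℝ)

def effL : List (Fin n) → ℝ
  | [] => 0
  | i :: l => e i + q i * effL l

@[simp] lemma effL_nil : effL e q [] = 0 := rfl
@[simp] lemma effL_cons (i : Fin n) (l : List (Fin n)) :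
    effL e q (i :: l) = e i + q i * effL e q l := rfl

noncomputable def a (i : Fin n) : ℝ := e i / (1 - q i)

lemma eff_eq_effL : ∀ (k : ℕ) (x : Fin k → Fin n),
    eff n e q k x = effL e q (List.ofFn x) := by
  intro k
  induction k with
  | zero => intro x; simp [eff, effL]
  | succ m ih =>
    intro x
    rw [List.ofFn_succ, effL_cons]
    have ihx : effL e q (List.ofFn fun i : Fin m => x i.succ) = eff n e q m (x ∘ Fin.succ) := by
      rw [ih (x ∘ Fin.succ)]; rfl
    rw [ihx]
    unfold eff
    rw [Fin.sum_univ_succ]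
    congr 1
    · have : (Finset.univ.filter (fun l : Fin (m+1) => l < 0)) = ∅ := by
        ext l; simp [Fin.not_lt_zero]
      rw [this]; simp
    · rw [Finset.mul_sum]
      apply Finset.sum_congr rfl
      intro j _
      have hprod : ∏ l ∈ Finset.univ.filter (fun l : Fin (m+1) => l < j.succ), q (x l)
          = q (x 0) * ∏ l ∈ Finset.univ.filter (fun l : Fin m => l < j), q ((x ∘ Fin.succ) l) := by
        rw [Finset.prod_filter, Finset.prod_filter, Fin.prod_univ_succ]
        have h0 : (0 : Fin (m+1)) < j.succ := Fin.succ_pos j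
        simp only [h0, if_true]
        congr 1
        apply Finset.prod_congr rfl
        intro l _
        have : (Fin.succ l < Fin.succ j) = (l < j) := by
          simp [Fin.succ_lt_succ_iff]
        simp [this, Function.comp]
      rw [hprod]; simp only [Function.comp_apply]; ring


set_option linter.unusedSectionVars false


-- the global order: decreasing adjusted ecpm, ties by index
def rle (i k : Fin n) : Prop := a e q k < a e q i ∨ (a e q i = a e q k ∧ i ≤ k)

noncomputable instance : DecidableRel (rle e q) := fun _ _ => Classical.propDecidable _

instance : Std.Total (rle e q) where
  total i k := by
    rcases lt_trichotomy (a e q i) (a e q k) with h | h | h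
    · right; left; exact h
    · rcases le_total i k with h' | h'
      · left; right; exact ⟨h, h'⟩
      · right; right; exact ⟨h.symm, h'⟩
    · left; left; exact h

instance : IsTrans (Fin n) (rle e q) where
  trans i k l := by
    rintro (h1 | ⟨h1, h1'⟩) (h2 | ⟨h2, h2'⟩)
    · left; exact h2.trans h1
    · left; exact h2 ▸ h1
    · left; exact h1 ▸ h2
    · right; exact ⟨h1.trans h2, h1'.trans h2'⟩

instance : Std.Antisymm (rle e q) where
  antisymm i k := by
    rintro (h1 | ⟨h1, h1'⟩) (h2 | ⟨h2, h2'⟩)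
    · exact absurd h2 (lt_asymm h1)
    · exact absurd h1 (h2 ▸ lt_irrefl _)
    · exact absurd h2 (h1 ▸ lt_irrefl _)
    · exact le_antisymm h1' h2'

lemma rle_a_le {i k : Fin n} (h : rle e q i k) : a e q k ≤ a e q i := by
  rcases h with h | ⟨h, _⟩
  · exact le_of_lt h
  · exact le_of_eq h.symm


variable (he : ∀ i, 0 ≤ e i) (hq0 : ∀ i, 0 ≤ q i) (hq1 : ∀ i, q i < 1)
include he hq0 hq1

lemma e_eq (i : Fin n) : e i = a e q i * (1 - q i) := by
  have h : (1 : ℝ) - q i ≠ 0 := by have := hq1 i; linarith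
  simp only [a]; rw [div_mul_cancel₀ _ h]

lemma a_nonneg (i : Fin n) : 0 ≤ a e q i :=
  div_nonneg (he i) (by have := hq1 i; linarith)

lemma effL_nonneg : ∀ l : List (Fin n), 0 ≤ effL e q l := by
  intro l; induction l with
  | nil => simp
  | cons i l ih => simp only [effL_cons]
                   have := he i; have := hq0 i; nlinarith

/-- basic bound: if all adjusted ecpms are at most `A` then the efficiency is at most `A`. -/
lemma effL_le_bound : ∀ (l : List (Fin n)) (A : ℝ), 0 ≤ A →
    (∀ z ∈ l, e z ≤ A * (1 - q z)) → effL e q l ≤ A := by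
  intro l
  induction l with
  | nil => intro A hA _; simpa using hA
  | cons i l ih =>
    intro A hA hz
    have h1 : effL e q l ≤ A := ih A hA (fun z hzl => hz z (List.mem_cons_of_mem _ hzl))
    have h2 : e i ≤ A * (1 - q i) := hz i (List.mem_cons_self)
    have := hq0 i
    simp only [effL_cons]; nlinarith

/-- swapping two adjacent elements into decreasing-a order doesn't decrease efficiency. -/
lemma effL_swap {i b : Fin n} (hab : a e q i ≤ a e q b) (M : List (Fin n)) :
    effL e q (i :: b :: M) ≤ effL e q (b :: i :: M) := by
  simp only [effL_cons]
  have h1 : e i * (1 - q b) ≤ e b * (1 - q i) := by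
    rw [e_eq e q he hq0 hq1 i, e_eq e q he hq0 hq1 b]
    have hi := hq1 i; have hb := hq1 b
    have hia := a_nonneg e q he hq0 hq1 i
    nlinarith [mul_pos (by linarith : (0:ℝ) < 1 - q i) (by linarith : (0:ℝ) < 1 - q b)]
  nlinarith [effL_nonneg e q he hq0 hq1 M, hq0 i, hq0 b]

lemma effL_le_orderedInsert (i : Fin n) :
    ∀ (M : List (Fin n)), List.Pairwise (rle e q) M →
      effL e q (i :: M) ≤ effL e q (List.orderedInsert (rle e q) i M) := by
  intro M
  induction M with
  | nil => intro _; simp [List.orderedInsert]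
  | cons b M ih =>
    intro hs
    rw [List.orderedInsert]
    by_cases h : rle e q i b
    · simp [h]
    · simp only [h, if_false]
      have hbi : rle e q b i := (Std.Total.total (r := rle e q) i b).resolve_left h
      calc effL e q (i :: b :: M) ≤ effL e q (b :: i :: M) :=
            effL_swap e q he hq0 hq1 (rle_a_le e q hbi) M
        _ ≤ effL e q (b :: List.orderedInsert (rle e q) i M) := by
            simp only [effL_cons]
            have h3 := ih hs.of_cons
            simp only [effL_cons] at h3
            nlinarith [mul_le_mul_of_nonneg_left h3 (hq0 b)]

lemma effL_le_insertionSort : ∀ l : List (Fin n),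
    effL e q l ≤ effL e q (List.insertionSort (rle e q) l) := by
  intro l
  induction l with
  | nil => simp
  | cons i l ih =>
    rw [List.insertionSort]
    calc effL e q (i :: l) ≤ effL e q (i :: List.insertionSort (rle e q) l) := by
          simp only [effL_cons]; nlinarith [hq0 i]
      _ ≤ _ := effL_le_orderedInsert e q he hq0 hq1 i _
            (List.pairwise_insertionSort _ _)

/-- any permutation of a sorted list has efficiency at most the sorted list's. -/
lemma effL_le_sorted {l l₀ : List (Fin n)} (hperm : l.Perm l₀)
    (hs : List.Pairwise (rle e q) l₀) : effL e q l ≤ effL e q l₀ := by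
  have h1 := effL_le_insertionSort e q he hq0 hq1 l
  have h2 : List.insertionSort (rle e q) l = l₀ :=
    List.Perm.eq_of_pairwise' (List.pairwise_insertionSort _ _) hs
      ((List.perm_insertionSort _ l).trans hperm)
  rwa [h2] at h1


/-- sortedness by nonincreasing adjusted ecpm -/
def SortedA (e q : Fin n → ℝ) (L : List (Fin n)) : Prop :=
  List.Pairwise (fun u v => a e q v ≤ a e q u) L

omit he hq0 hq1 in
lemma sortedA_of_sorted {L : List (Fin n)} (h : List.Pairwise (rle e q) L) :
    SortedA e q L := h.imp (fun hr => rle_a_le e q hr)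

omit he hq0 hq1 in
lemma sortedA_cons {d : Fin n} {L : List (Fin n)} (h : SortedA e q (d :: L)) :
    SortedA e q L ∧ ∀ z ∈ L, a e q z ≤ a e q d :=
  ⟨(List.pairwise_cons.1 h).2, (List.pairwise_cons.1 h).1⟩

lemma a_le_bound {d z : Fin n} (hz : a e q z ≤ a e q d) : e z ≤ a e q d * (1 - q z) := by
  rw [e_eq e q he hq0 hq1 z]
  have := hq1 z
  nlinarith

/-- efficiency of a sorted list is bounded by the head's adjusted ecpm -/
lemma effL_le_a_head {d : Fin n} {L : List (Fin n)} (h : ∀ z ∈ L, a e q z ≤ a e q d) :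
    effL e q L ≤ a e q d :=
  effL_le_bound e q he hq0 hq1 L _ (a_nonneg e q he hq0 hq1 d)
    (fun z hz => a_le_bound e q he hq0 hq1 (h z hz))

/-- prepending a dominating element doesn't decrease efficiency -/
lemma effL_le_cons_head {d : Fin n} {L : List (Fin n)} (h : ∀ z ∈ L, a e q z ≤ a e q d) :
    effL e q L ≤ effL e q (d :: L) := by
  have h1 : effL e q L ≤ a e q d := effL_le_a_head e q he hq0 hq1 h
  have h2 : e d = a e q d * (1 - q d) := e_eq e q he hq0 hq1 d
  have := hq1 d; have := hq0 d
  simp only [effL_cons]; nlinarith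

/-- sublists of a sorted list have smaller efficiency -/
lemma effL_mono_sublist : ∀ {l L : List (Fin n)}, l.Sublist L → SortedA e q L →
    effL e q l ≤ effL e q L := by
  intro l L hsub
  induction hsub with
  | slnil => intro _; simp
  | cons d hsub ih =>
    intro hs
    calc effL e q _ ≤ _ := ih (sortedA_cons e q hs).1
      _ ≤ _ := effL_le_cons_head e q he hq0 hq1 (sortedA_cons e q hs).2
  | cons_cons d hsub ih =>
    intro hs
    simp only [effL_cons]
    have := ih (sortedA_cons e q hs).1
    nlinarith [hq0 d]

end OptNest

namespace OptNest
variable {n : ℕ} (e q : Fin n → ℝ)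

/-- DP: best efficiency of a length-`k` sublist (for `k ≥ |L|`, of `L` itself). -/
noncomputable def g : List (Fin n) → ℕ → ℝ
  | _, 0 => 0
  | [], _+1 => 0
  | d :: L, k+1 => max (g L (k+1)) (e d + q d * g L k)

@[simp] lemma g_zero (L : List (Fin n)) : g e q L 0 = 0 := by cases L <;> rfl
@[simp] lemma g_nil (k : ℕ) : g e q [] k = 0 := by cases k <;> rfl
@[simp] lemma g_cons (d : Fin n) (L : List (Fin n)) (k : ℕ) :
    g e q (d :: L) (k+1) = max (g e q L (k+1)) (e d + q d * g e q L k) := rfl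

variable (he : ∀ i, 0 ≤ e i) (hq0 : ∀ i, 0 ≤ q i) (hq1 : ∀ i, q i < 1)
include he hq0 hq1

lemma g_nonneg : ∀ (L : List (Fin n)) (k : ℕ), 0 ≤ g e q L k := by
  intro L
  induction L with
  | nil => intro k; simp
  | cons d L ih =>
    intro k
    cases k with
    | zero => simp
    | succ k =>
      rw [g_cons]
      have := ih k
      have := he d; have := hq0 d
      have : 0 ≤ e d + q d * g e q L k := by nlinarith
      exact le_max_of_le_right this

lemma g_mono : ∀ (L : List (Fin n)) (k : ℕ), g e q L k ≤ g e q L (k+1) := by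
  intro L
  induction L with
  | nil => intro k; simp
  | cons d L ih =>
    intro k
    cases k with
    | zero =>
      simp only [g_zero, g_cons]
      have := he d; have := hq0 d
      have h0 : 0 ≤ g e q L 0 := g_nonneg e q he hq0 hq1 L 0
      exact le_max_of_le_right (by nlinarith)
    | succ k =>
      rw [g_cons, g_cons]
      apply max_le_max (ih (k+1))
      have := ih k
      nlinarith [hq0 d]

lemma g_le_bound : ∀ (L : List (Fin n)) (k : ℕ) (A : ℝ), 0 ≤ A →
    (∀ z ∈ L, e z ≤ A * (1 - q z)) → g e q L k ≤ A := by
  intro L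
  induction L with
  | nil => intro k A hA _; simpa using hA
  | cons d L ih =>
    intro k A hA hz
    cases k with
    | zero => simpa using hA
    | succ k =>
      rw [g_cons]
      have hL := fun z hzl => hz z (List.mem_cons_of_mem _ hzl)
      apply max_le (ih (k+1) A hA hL)
      have h1 := ih k A hA hL
      have h2 := hz d (List.mem_cons_self)
      nlinarith [hq0 d]

omit he hq0 hq1 in
lemma g_le_cons (d : Fin n) (L : List (Fin n)) (k : ℕ) :
    g e q L k ≤ g e q (d :: L) k := by
  cases k with
  | zero => simp
  | succ k => exact le_max_left _ _

/-- G1': any sublist's efficiency is at most the DP optimum at its length. -/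
lemma effL_le_g : ∀ {l L : List (Fin n)}, l.Sublist L → effL e q l ≤ g e q L l.length := by
  intro l L hsub
  induction hsub with
  | slnil => simp
  | @cons l L d hsub ih =>
    exact ih.trans (g_le_cons e q d L _)
  | @cons_cons l L d hsub ih =>
    simp only [List.length_cons, g_cons, effL_cons]
    apply le_max_of_le_right
    nlinarith [hq0 d]

/-- G3': beyond the length, the DP value is the whole list's efficiency. -/
lemma g_eq_effL : ∀ (L : List (Fin n)) (k : ℕ), SortedA e q L → L.length ≤ k →
    g e q L k = effL e q L := by
  intro L
  induction L with
  | nil => intro k _ _; simp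
  | cons d L ih =>
    intro k hs hk
    cases k with
    | zero => simp at hk
    | succ k =>
      have hk' : L.length ≤ k := by simpa using hk
      rw [g_cons, ih k (sortedA_cons e q hs).1 hk',
          ih (k+1) (sortedA_cons e q hs).1 (le_trans hk' (Nat.le_succ k))]
      rw [max_eq_right]
      · rfl
      · exact effL_le_cons_head e q he hq0 hq1 (sortedA_cons e q hs).2

/-- G2: the DP optimum is attained by some sublist. -/
lemma exists_g_witness : ∀ (L : List (Fin n)) (k : ℕ), SortedA e q L → k ≤ L.length →
    ∃ l, l.Sublist L ∧ l.length = k ∧ effL e q l = g e q L k := by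
  intro L
  induction L with
  | nil =>
    intro k _ hk
    have hk0 : k = 0 := by simpa using hk
    subst hk0; exact ⟨[], by simp⟩
  | cons d L ih =>
    intro k hs hk
    cases k with
    | zero => exact ⟨[], by simp⟩
    | succ k =>
      have hk' : k ≤ L.length := by simpa using hk
      rcases ih k (sortedA_cons e q hs).1 hk' with ⟨l₂, hsub₂, hlen₂, heq₂⟩
      by_cases hbr : g e q L (k+1) ≤ e d + q d * g e q L k
      · refine ⟨d :: l₂, (hsub₂.cons₂ d), by simp [hlen₂], ?_⟩
        rw [g_cons, max_eq_right hbr]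
        simp [heq₂]
      · push_neg at hbr
        have hk2 : k + 1 ≤ L.length := by
          by_contra hc
          push_neg at hc
          have hle : L.length ≤ k := by omega
          have e1 := g_eq_effL e q he hq0 hq1 L k (sortedA_cons e q hs).1 hle
          have e2 := g_eq_effL e q he hq0 hq1 L (k+1) (sortedA_cons e q hs).1 (by omega)
          rw [e1, e2] at hbr
          have := effL_le_a_head e q he hq0 hq1 (sortedA_cons e q hs).2
          have h2 : e d = a e q d * (1 - q d) := e_eq e q he hq0 hq1 d
          nlinarith [hq0 d, hq1 d]
        rcases ih (k+1) (sortedA_cons e q hs).1 hk2 with ⟨l₁, hsub₁, hlen₁, heq₁⟩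
        refine ⟨l₁, hsub₁.cons d, hlen₁, ?_⟩
        rw [g_cons, max_eq_left (le_of_lt hbr), heq₁]



/-! ### Log-convexity of the deficit sequence -/

omit he hq0 hq1 in
lemma shift_lc {δ mp mm mk : ℝ} (hδ : 0 ≤ δ) (hp : 0 ≤ mp) (hm : 0 ≤ mm) (hk : 0 ≤ mk)
    (h : mk^2 ≤ mp * mm) : (δ + mk)^2 ≤ (δ + mp) * (δ + mm) := by
  have key : 2 * mk ≤ mp + mm := by nlinarith [sq_nonneg (mp - mm)]
  nlinarith

omit he hq0 hq1 in
lemma min_lc_edge {s0 s1 s2 qd : ℝ} (h2 : 0 ≤ s2) (h21 : s2 ≤ s1) (h10 : s1 ≤ s0)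
    (hq : 0 ≤ qd) (lc : s1^2 ≤ s2 * s0) :
    (min s1 (qd * s0))^2 ≤ min s2 (qd * s1) * s0 := by
  have hm0 : 0 ≤ min s1 (qd * s0) := le_min (by linarith) (by nlinarith)
  rcases min_cases s2 (qd * s1) with ⟨hmin, _⟩ | ⟨hmin, _⟩ <;> rw [hmin]
  · nlinarith [min_le_left s1 (qd * s0)]
  · nlinarith [min_le_left s1 (qd * s0), min_le_right s1 (qd * s0)]

omit he hq0 hq1 in
lemma min_lc {s0 s1 s2 s3 qd : ℝ} (h3 : 0 ≤ s3) (h32 : s3 ≤ s2) (h21 : s2 ≤ s1)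
    (h10 : s1 ≤ s0) (hq : 0 ≤ qd) (lc1 : s2^2 ≤ s3 * s1) (lc2 : s1^2 ≤ s2 * s0) :
    (min s2 (qd * s1))^2 ≤ min s3 (qd * s2) * min s1 (qd * s0) := by
  have h2 : 0 ≤ s2 := le_trans h3 h32
  have h1 : 0 ≤ s1 := le_trans h2 h21
  have h0 : 0 ≤ s0 := le_trans h1 h10
  have hm0 : 0 ≤ min s2 (qd * s1) := le_min h2 (mul_nonneg hq h1)
  have hma : min s2 (qd * s1) ≤ s2 := min_le_left _ _
  have hmb : min s2 (qd * s1) ≤ qd * s1 := min_le_right _ _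
  rcases min_cases s3 (qd * s2) with ⟨hA, _⟩ | ⟨hA, _⟩ <;>
    rcases min_cases s1 (qd * s0) with ⟨hB, _⟩ | ⟨hB, _⟩ <;> rw [hA, hB]
  · -- s3 * s1
    nlinarith
  · -- s3 * (qd * s0)
    rcases eq_or_lt_of_le (mul_nonneg h2 h1) with hz | hz
    · have : min s2 (qd * s1) ^ 2 ≤ qd * (s2 * s1) := by nlinarith
      nlinarith [mul_nonneg (mul_nonneg h3 hq) h0]
    · have hmul : (s2^2) * (s1^2) ≤ (s3 * s1) * (s2 * s0) :=
        mul_le_mul lc1 lc2 (sq_nonneg s1) (mul_nonneg h3 h1)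
      have key : s2 * s1 ≤ s3 * s0 := by nlinarith
      nlinarith
  · -- (qd * s2) * s1
    nlinarith
  · -- (qd * s2) * (qd * s0)
    nlinarith [sq_nonneg qd, mul_nonneg (mul_nonneg hq hq) (mul_nonneg h2 h0),
      mul_le_mul_of_nonneg_left lc2 (mul_nonneg hq hq)]

lemma a_le_of_bound {d : Fin n} {A : ℝ} (h : e d ≤ A * (1 - q d)) : a e q d ≤ A := by
  have h1 : (0:ℝ) < 1 - q d := by have := hq1 d; linarith
  rw [e_eq e q he hq0 hq1 d] at h
  exact le_of_mul_le_mul_right (by linarith [h]) h1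

/-- Main lemma: the deficit sequence `A - g L k` is log-convex. -/
lemma g_logconvex : ∀ (L : List (Fin n)), SortedA e q L → ∀ (A : ℝ), 0 ≤ A →
    (∀ z ∈ L, e z ≤ A * (1 - q z)) → ∀ k : ℕ,
    (A - g e q L (k+1))^2 ≤ (A - g e q L (k+2)) * (A - g e q L k) := by
  intro L
  induction L with
  | nil => intro _ A _ _ k; simp [sq]
  | cons d L ih =>
    intro hs A hA hz k
    obtain ⟨hsL, hdom⟩ := sortedA_cons e q hs
    have hd : a e q d ≤ A := a_le_of_bound e q he hq0 hq1 (hz d (List.mem_cons_self))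
    have had : 0 ≤ a e q d := a_nonneg e q he hq0 hq1 d
    have hzL : ∀ z ∈ L, e z ≤ a e q d * (1 - q z) :=
      fun z hzl => a_le_bound e q he hq0 hq1 (hdom z hzl)
    -- the deficit sequence for the tail at threshold a d
    set s : ℕ → ℝ := fun j => a e q d - g e q L j with hs_def
    have hs_nonneg : ∀ j, 0 ≤ s j := fun j => by
      have := g_le_bound e q he hq0 hq1 L j _ had hzL
      simp [hs_def]; linarith
    have hs_anti : ∀ j, s (j+1) ≤ s j := fun j => by
      have := g_mono e q he hq0 hq1 L j
      simp [hs_def]; linarith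
    have hs_lc : ∀ j, (s (j+1))^2 ≤ s (j+2) * s j := fun j => ih hsL _ had hzL j
    -- the deficit sequence for d :: L at threshold a d is a min
    have hmin : ∀ j, a e q d - g e q (d :: L) (j+1) = min (s (j+1)) (q d * s j) := by
      intro j
      rw [g_cons]
      have hed : e d = a e q d * (1 - q d) := e_eq e q he hq0 hq1 d
      have : a e q d - max (g e q L (j+1)) (e d + q d * g e q L j)
          = min (a e q d - g e q L (j+1)) (a e q d - (e d + q d * g e q L j)) := by
        rcases max_cases (g e q L (j+1)) (e d + q d * g e q L j) with ⟨h1, h2⟩ | ⟨h1, h2⟩ <;>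
          rw [h1] <;> [rw [min_eq_left (by linarith)]; rw [min_eq_right (by linarith)]]
      rw [this]
      have e1 : a e q d - g e q L (j+1) = s (j+1) := by simp [hs_def]
      have e2 : a e q d - (e d + q d * g e q L j) = q d * s j := by
        simp only [hs_def]; rw [hed]; ring
      rw [e1, e2]
    have hm_nonneg : ∀ j, 0 ≤ a e q d - g e q (d :: L) j := by
      intro j
      have hall : ∀ z ∈ d :: L, e z ≤ a e q d * (1 - q z) := by
        intro z hzl
        rcases List.mem_cons.1 hzl with h | h
        · subst h; exact le_of_eq (e_eq e q he hq0 hq1 z)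
        · exact hzL z h
      have := g_le_bound e q he hq0 hq1 (d :: L) j _ had hall
      linarith
    -- log-convexity of the min-sequence
    have hmlc : (a e q d - g e q (d :: L) (k+1))^2
        ≤ (a e q d - g e q (d :: L) (k+2)) * (a e q d - g e q (d :: L) k) := by
      cases k with
      | zero =>
        rw [hmin 0, hmin 1]
        have h00 : a e q d - g e q (d :: L) 0 = s 0 := by simp [hs_def]
        rw [h00]
        exact min_lc_edge (hs_nonneg 2) (hs_anti 1) (hs_anti 0) (hq0 d) (hs_lc 0)
      | succ k =>
        rw [hmin k, hmin (k+1), hmin (k+2)]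
        exact min_lc (hs_nonneg (k+3)) (hs_anti (k+2)) (hs_anti (k+1)) (hs_anti k)
          (hq0 d) (hs_lc (k+1)) (hs_lc k)
    -- shift from threshold a d to threshold A
    have hδ : 0 ≤ A - a e q d := by linarith
    have := shift_lc hδ (hm_nonneg (k+2)) (hm_nonneg k) (hm_nonneg (k+1)) hmlc
    calc (A - g e q (d :: L) (k+1))^2
        = ((A - a e q d) + (a e q d - g e q (d :: L) (k+1)))^2 := by ring_nf
      _ ≤ ((A - a e q d) + (a e q d - g e q (d :: L) (k+2)))
          * ((A - a e q d) + (a e q d - g e q (d :: L) k)) := this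
      _ = _ := by ring_nf

/-- The crux: once prepending the dominating element is optimal, it stays optimal. -/
lemma crux {d : Fin n} {L : List (Fin n)} (hs : SortedA e q (d :: L)) (k : ℕ)
    (h : g e q L (k+1) ≤ e d + q d * g e q L k) :
    g e q L (k+2) ≤ e d + q d * g e q L (k+1) := by
  obtain ⟨hsL, hdom⟩ := sortedA_cons e q hs
  have had : 0 ≤ a e q d := a_nonneg e q he hq0 hq1 d
  have hzL : ∀ z ∈ L, e z ≤ a e q d * (1 - q z) :=
    fun z hzl => a_le_bound e q he hq0 hq1 (hdom z hzl)
  have hed : e d = a e q d * (1 - q d) := e_eq e q he hq0 hq1 d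
  set s : ℕ → ℝ := fun j => a e q d - g e q L j with hs_def
  have hs_nonneg : ∀ j, 0 ≤ s j := fun j => by
    have := g_le_bound e q he hq0 hq1 L j _ had hzL
    simp [hs_def]; linarith
  have hs_anti : ∀ j, s (j+1) ≤ s j := fun j => by
    have := g_mono e q he hq0 hq1 L j
    simp [hs_def]; linarith
  have hlc := g_logconvex e q he hq0 hq1 L hsL _ had hzL k
  have h' : q d * s k ≤ s (k+1) := by simp only [hs_def]; nlinarith
  have goal' : q d * s (k+1) ≤ s (k+2) := by
    rcases eq_or_lt_of_le (hs_nonneg k) with hz | hz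
    · have h1 : s (k+1) = 0 := le_antisymm (hz ▸ hs_anti k) (hs_nonneg (k+1))
      rw [h1]; simpa using hs_nonneg (k+2)
    · have hlc' : (s (k+1))^2 ≤ s (k+2) * s k := by
        simpa only [hs_def] using hlc
      nlinarith [hs_nonneg (k+1)]
  simp only [hs_def] at goal'
  nlinarith


omit he hq0 hq1 in
lemma exists_extension : ∀ (L l : List (Fin n)), l.Sublist L → l.length < L.length →
    ∃ l', l.Sublist l' ∧ l'.Sublist L ∧ l'.length = l.length + 1 := by
  intro L
  induction L with
  | nil => intro l _ h; simp at h
  | cons d L ih =>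
    intro l hsub hlen
    rcases List.sublist_cons_iff.1 hsub with hcase | ⟨l₀, rfl, hl₀⟩
    · by_cases h : l.length < L.length
      · obtain ⟨l', h1, h2, h3⟩ := ih l hcase h
        exact ⟨l', h1, h2.cons d, h3⟩
      · have : l.length = L.length := le_antisymm (hcase.length_le) (not_lt.1 h)
        have heq : l = L := hcase.eq_of_length this
        subst heq
        exact ⟨d :: l, l.sublist_cons_self d, List.Sublist.refl _, rfl⟩
    · have hlen₀ : l₀.length < L.length := by simpa using hlen
      obtain ⟨l', h1, h2, h3⟩ := ih l₀ hl₀ hlen₀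
      exact ⟨d :: l', h1.cons₂ d, h2.cons₂ d, by simp [h3]⟩

/-- The nestedness theorem at the level of sorted lists. -/
lemma nest : ∀ (L : List (Fin n)), SortedA e q L → ∀ (k : ℕ) (S : List (Fin n)),
    S.Sublist L → S.length = k → g e q L k ≤ effL e q S → k < L.length →
    ∃ S', S'.Sublist L ∧ S.Sublist S' ∧ S'.length = k + 1 ∧
      g e q L (k+1) ≤ effL e q S' := by
  intro L
  induction L with
  | nil => intro _ k S _ _ _ hk; simp at hk
  | cons d L ih =>
    intro hs k S hsub hlen hopt hk
    obtain ⟨hsL, hdom⟩ := sortedA_cons e q hs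
    cases k with
    | zero =>
      obtain ⟨l, hl1, hl2, hl3⟩ := exists_g_witness e q he hq0 hq1 (d::L) 1 hs
        (by simp)
      have hS : S = [] := List.length_eq_zero_iff.1 hlen
      exact ⟨l, hl1, hS ▸ (List.nil_sublist l), hl2, le_of_eq hl3.symm⟩
    | succ k' =>
      rcases List.sublist_cons_iff.1 hsub with hcase | ⟨S₀, rfl, hS₀⟩
      · -- Case B : S avoids d
        have hG1 : effL e q S ≤ g e q L (k'+1) := by
          have := effL_le_g e q he hq0 hq1 hcase; rwa [hlen] at this
        have hSopt : g e q L (k'+1) = effL e q S :=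
          le_antisymm (le_trans (g_le_cons e q d L _) hopt) hG1
        by_cases h2 : g e q L (k'+2) ≤ e d + q d * g e q L (k'+1)
        · -- take S' = d :: S
          refine ⟨d :: S, hcase.cons₂ d, S.sublist_cons_self d, by simp [hlen], ?_⟩
          rw [g_cons]
          apply max_le
          · rw [effL_cons, ← hSopt]; exact h2
          · rw [effL_cons, ← hSopt]
        · push_neg at h2
          by_cases hkL : k' + 1 < L.length
          · obtain ⟨S', h1, h2', h3, h4⟩ := ih hsL (k'+1) S hcase hlen hSopt.le hkL
            refine ⟨S', h1.cons d, h2', h3, ?_⟩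
            rw [g_cons]
            exact max_le h4 (le_trans (le_of_lt h2) h4)
          · -- k'+1 = L.length : S = L, and h2 is impossible
            exfalso
            have hL : k' + 1 = L.length := by
              have : k' + 1 < L.length + 1 := by simpa using hk
              omega
            have e1 : g e q L (k'+1) = effL e q L :=
              g_eq_effL e q he hq0 hq1 L _ hsL hL.ge
            have e2 : g e q L (k'+2) = effL e q L :=
              g_eq_effL e q he hq0 hq1 L _ hsL (by omega)
            have hbd : effL e q L ≤ a e q d := effL_le_a_head e q he hq0 hq1 hdom
            have hed : e d = a e q d * (1 - q d) := e_eq e q he hq0 hq1 d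
            rw [e1, e2] at h2
            nlinarith [hq0 d, hq1 d]
      · -- Case A : S = d :: S₀
        have hlen₀ : S₀.length = k' := by simpa using hlen
        have hG1₀ : effL e q S₀ ≤ g e q L k' := by
          have := effL_le_g e q he hq0 hq1 hS₀; rwa [hlen₀] at this
        have hopt' : g e q (d :: L) (k'+1) ≤ e d + q d * effL e q S₀ := by
          rw [effL_cons] at hopt; exact hopt
        have hyp_crux : g e q L (k'+1) ≤ e d + q d * g e q L k' := by
          have h1 : g e q L (k'+1) ≤ g e q (d::L) (k'+1) := g_le_cons e q d L _
          have h2 : e d + q d * effL e q S₀ ≤ e d + q d * g e q L k' := by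
            nlinarith [hq0 d]
          linarith
        have hconc := crux e q he hq0 hq1 hs k' hyp_crux
        have hkL : k' < L.length := by
          have : k' + 1 < L.length + 1 := by simpa using hk
          omega
        by_cases hqd : 0 < q d
        · -- S₀ is optimal at level k' in L
          have hopt₀ : g e q L k' ≤ effL e q S₀ := by
            have h1 : e d + q d * g e q L k' ≤ g e q (d::L) (k'+1) := le_max_right _ _
            have := le_trans h1 hopt'
            have := (mul_le_mul_iff_right₀ hqd).1 (by linarith : q d * g e q L k' ≤ q d * effL e q S₀)
            linarith
          obtain ⟨S₀', h1, h2', h3, h4⟩ := ih hsL k' S₀ hS₀ hlen₀ hopt₀ hkL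
          refine ⟨d :: S₀', h1.cons₂ d, h2'.cons₂ d, by simp [h3], ?_⟩
          rw [g_cons, effL_cons]
          apply max_le
          · nlinarith [hq0 d]
          · nlinarith [hq0 d]
        · have hqd0 : q d = 0 := le_antisymm (not_lt.1 hqd) (hq0 d)
          obtain ⟨S₀', h1, h2', h3⟩ := exists_extension L S₀ hS₀ (by omega)
          refine ⟨d :: S₀', h2'.cons₂ d, h1.cons₂ d, by simp [h3, hlen₀], ?_⟩
          rw [g_cons, effL_cons, hqd0]
          rw [hqd0] at hconc
          apply max_le
          · simpa using hconc
          · simp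


/-! ### Connecting `setValue` with the sorted-list formula -/

lemma setValue_isGreatest (U : Finset (Fin n)) :
    IsGreatest {r : ℝ | ∃ x : Fin U.card → Fin n,
        Function.Injective x ∧ (∀ j, x j ∈ U) ∧ r = eff n e q U.card x}
      (effL e q (Finset.sort U (rle e q))) := by
  set l := Finset.sort U (rle e q) with hl
  have hlen : l.length = U.card := Finset.length_sort _
  constructor
  · -- membership
    refine ⟨fun j => l.get (Fin.cast hlen.symm j), ?_, ?_, ?_⟩
    · exact (List.nodup_iff_injective_get.1 (Finset.sort_nodup U _)).comp
        (Fin.cast_injective hlen.symm)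
    · intro j
      exact (Finset.mem_sort _).1 (List.get_mem l (Fin.cast hlen.symm j))
    · rw [eff_eq_effL]
      congr 1
      apply List.ext_getElem
      · simp [hlen]
      · intro i h1 h2
        simp [List.getElem_ofFn]
  · -- upper bound
    rintro r ⟨x, hinj, hmem, rfl⟩
    rw [eff_eq_effL]
    have hnd : (List.ofFn x).Nodup := List.nodup_ofFn.2 hinj
    have himg : Finset.image x Finset.univ = U := by
      apply Finset.eq_of_subset_of_card_le
      · intro z hz
        rcases Finset.mem_image.1 hz with ⟨j, _, rfl⟩
        exact hmem j
      · rw [Finset.card_image_of_injective _ hinj, Finset.card_univ, Fintype.card_fin]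
    have hperm : (List.ofFn x).Perm l := by
      rw [List.perm_ext_iff_of_nodup hnd (Finset.sort_nodup U _)]
      intro z
      rw [List.mem_ofFn, Finset.mem_sort]
      constructor
      · rintro ⟨j, rfl⟩; exact hmem j
      · intro hz
        have : z ∈ Finset.image x Finset.univ := by rw [himg]; exact hz
        rcases Finset.mem_image.1 this with ⟨j, _, rfl⟩
        exact ⟨j, rfl⟩
    exact effL_le_sorted e q he hq0 hq1 hperm (Finset.pairwise_sort U _)

omit he hq0 hq1 in
lemma sort_sublist_of_subset {S C : Finset (Fin n)} (h : S ⊆ C) :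
    (S.sort (rle e q)).Sublist (C.sort (rle e q)) :=
  List.sublist_of_subperm_of_pairwise
    (List.Nodup.subperm (Finset.sort_nodup S _)
      (fun z hz => (Finset.mem_sort _).2 (h ((Finset.mem_sort _).1 hz))))
    (Finset.pairwise_sort S _) (Finset.pairwise_sort C _)

omit he hq0 hq1 in
lemma sort_toFinset_eq {l : List (Fin n)} (hnd : l.Nodup)
    (hsort : List.Pairwise (rle e q) l) : l.toFinset.sort (rle e q) = l := by
  apply List.Perm.eq_of_pairwise' (Finset.pairwise_sort _ _) hsort
  rw [List.perm_ext_iff_of_nodup (Finset.sort_nodup _ _) hnd]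
  intro z
  rw [Finset.mem_sort, List.mem_toFinset]


lemma setValue_eq (U : Finset (Fin n)) :
    setValue n e q U = effL e q (U.sort (rle e q)) :=
  (setValue_isGreatest e q he hq0 hq1 U).csSup_eq

end OptNest

/-- Subset structure of optimal assignments: for `1 ≤ j ≤ |C|`, every optimal
`(j-1)`-element subset of `C` is strictly contained in some optimal
`j`-element subset of `C`. -/
theorem optimal_sets_are_nested (n : ℕ) (e q : Fin n → ℝ)
    (he : ∀ i, 0 ≤ e i) (hq0 : ∀ i, 0 ≤ q i) (hq1 : ∀ i, q i < 1)
    (C : Finset (Fin n)) (j : ℕ) (hj1 : 1 ≤ j) (hj : j ≤ C.card)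
    (S : Finset (Fin n)) (hSC : S ⊆ C) (hScard : S.card = j - 1)
    (hSopt : ∀ T ⊆ C, T.card = j - 1 → setValue n e q T ≤ setValue n e q S) :
    ∃ S' : Finset (Fin n), S' ⊆ C ∧ S'.card = j ∧
      (∀ T ⊆ C, T.card = j → setValue n e q T ≤ setValue n e q S') ∧
      S ⊂ S' := by
  classical
  set L := C.sort (OptNest.rle e q) with hL
  have hsL : OptNest.SortedA e q L :=
    OptNest.sortedA_of_sorted e q (Finset.pairwise_sort C _)
  have hlenL : L.length = C.card := Finset.length_sort _
  have hSV : ∀ U : Finset (Fin n),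
      setValue n e q U = OptNest.effL e q (U.sort (OptNest.rle e q)) :=
    fun U => OptNest.setValue_eq e q he hq0 hq1 U
  have hSsl : (S.sort (OptNest.rle e q)).Sublist L :=
    OptNest.sort_sublist_of_subset e q hSC
  have hSlen : (S.sort (OptNest.rle e q)).length = j - 1 := by
    rw [Finset.length_sort, hScard]
  -- optimality of S at the list level
  obtain ⟨l, hl1, hl2, hl3⟩ := OptNest.exists_g_witness e q he hq0 hq1 L (j-1) hsL
    (by omega)
  have hlnd : l.Nodup := (Finset.sort_nodup C _).sublist hl1
  have hlsort : List.Pairwise (OptNest.rle e q) l :=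
    (Finset.pairwise_sort C _).sublist hl1
  have hTsub : l.toFinset ⊆ C := fun z hz =>
    (Finset.mem_sort _).1 (hl1.subset (List.mem_toFinset.1 hz))
  have hTcard : l.toFinset.card = j - 1 := by
    rw [List.toFinset_card_of_nodup hlnd, hl2]
  have hTval : setValue n e q l.toFinset = OptNest.effL e q l := by
    rw [hSV, OptNest.sort_toFinset_eq e q hlnd hlsort]
  have hopt : OptNest.g e q L (j-1) ≤ OptNest.effL e q (S.sort (OptNest.rle e q)) := by
    rw [← hl3, ← hTval]
    have h1 := hSopt l.toFinset hTsub hTcard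
    rw [hSV S] at h1
    exact h1
  obtain ⟨S'l, h1, h2, h3, h4⟩ := OptNest.nest e q he hq0 hq1 L hsL (j-1)
    (S.sort (OptNest.rle e q)) hSsl hSlen hopt (by omega)
  have hj1' : j - 1 + 1 = j := by omega
  have hS'nd : S'l.Nodup := (Finset.sort_nodup C _).sublist h1
  have hS'sort : List.Pairwise (OptNest.rle e q) S'l :=
    (Finset.pairwise_sort C _).sublist h1
  have hS'val : setValue n e q S'l.toFinset = OptNest.effL e q S'l := by
    rw [hSV, OptNest.sort_toFinset_eq e q hS'nd hS'sort]
  have hS'card : S'l.toFinset.card = j := by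
    rw [List.toFinset_card_of_nodup hS'nd, h3, hj1']
  refine ⟨S'l.toFinset, ?_, hS'card, ?_, ?_⟩
  · exact fun z hz => (Finset.mem_sort _).1 (h1.subset (List.mem_toFinset.1 hz))
  · intro T hTC hTcardj
    have hTsl := OptNest.sort_sublist_of_subset e q (S := T) (C := C) hTC
    have hle := OptNest.effL_le_g e q he hq0 hq1 hTsl
    rw [Finset.length_sort, hTcardj] at hle
    rw [hSV T, hS'val]
    rw [hj1'] at h4
    exact le_trans hle h4
  · constructor
    · intro z hz
      exact List.mem_toFinset.2 (h2.subset ((Finset.mem_sort _).2 hz))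
    · intro hcon
      have := Finset.card_le_card hcon
      omega
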